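/- Let B, β, v, w, ρ, γ, μ, N₀ > 0 with R₀ = Bβ/(N₀(v+μ)(w+μ)) > 1, and let S* = (w+μ)N₀/β and A* = (B − (v+μ)(w+μ)N₀/β)/(w+μ) be the endemic equilibrium values. Then every complex root of the characteristic polynomial of the 5×5 real matrix J(S*, A*) has negative real part. (This expresses Theorem 3.3: the unique endemic equilibrium is locally asymptotically stable whenever R₀ > 1.) -/

import Mathlib

open Polynomial

set_option maxHeartbeats 1000000
set_option maxRecDepth 8000

private lemma det5_aux {R : Type*} [CommRing R] (a b c w' g' v' r m d x : R) :
    (!![x + a, b, 0, 0, 0;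
        -c, x - d, 0, 0, 0;
        0, -w', x + r, 0, 0;
        -v', 0, -g', x + m, 0;
        0, 0, 0, 0, x + m] : Matrix (Fin 5) (Fin 5) R).det
    = ((x + a) * (x - d) + b * c) * ((x + r) * (x + m) ^ 2) := by
  simp [Matrix.det_succ_row_zero, Fin.sum_univ_succ, Fin.succAbove]
  ring

private lemma charpoly5 (a b c w' g' v' r m d : ℝ) :
    (!![-a, -b, 0, 0, 0;
        c, d, 0, 0, 0;
        0, w', -r, 0, 0;
        v', 0, g', -m, 0;
        0, 0, 0, 0, -m] : Matrix (Fin 5) (Fin 5) ℝ).charpoly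
    = ((X + C a) * (X - C d) + C b * C c) * ((X + C r) * (X + C m) ^ 2) := by
  rw [Matrix.charpoly]
  have hM : (!![-a, -b, 0, 0, 0;
        c, d, 0, 0, 0;
        0, w', -r, 0, 0;
        v', 0, g', -m, 0;
        0, 0, 0, 0, -m] : Matrix (Fin 5) (Fin 5) ℝ).charmatrix
      = !![X + C a, C b, 0, 0, 0;
           -C c, X - C d, 0, 0, 0;
           0, -C w', X + C r, 0, 0;
           -C v', 0, -C g', X + C m, 0;
           0, 0, 0, 0, X + C m] := by
    refine Matrix.ext fun i j => ?_
    fin_cases i <;> fin_cases j <;>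
      simp [Matrix.charmatrix_apply, sub_eq_add_neg, Matrix.vecHead, Matrix.vecTail]
  rw [hM]
  exact det5_aux (C a) (C b) (C c) (C w') (C g') (C v') (C r) (C m) (C d) X

private lemma quad_root_neg (a k : ℝ) (ha : 0 < a) (hk : 0 < k) (z : ℂ)
    (hz : z ^ 2 + (a : ℂ) * z + (k : ℂ) = 0) : z.re < 0 := by
  set x := z.re with hx
  set y := z.im with hy
  have h := hz
  rw [Complex.ext_iff] at h
  simp [pow_two, Complex.mul_re, Complex.mul_im, ← hx, ← hy] at h
  obtain ⟨hre, him⟩ := h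
  have him' : y * (2 * x + a) = 0 := by linarith [him]
  rcases mul_eq_zero.mp him' with h0 | h0
  · by_contra hcon
    push_neg at hcon
    rw [h0] at hre
    nlinarith
  · linarith


/-- **Theorem 3.3 (stability).** If `R₀ > 1`, then every complex root of the
characteristic polynomial of the Jacobian of the reduced SAIVRD system at the unique
endemic equilibrium has negative real part. -/
theorem endemic_equilibrium_stable
    (B β v w ρ γ μ N₀ : ℝ)
    (hB : 0 < B) (hβ : 0 < β) (hv : 0 < v) (hw : 0 < w)
    (hρ : 0 < ρ) (hγ : 0 < γ) (hμ : 0 < μ) (hN₀ : 0 < N₀)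
    (hR0 : 1 < B * β / (N₀ * (v + μ) * (w + μ))) :
    let Sstar : ℝ := (w + μ) * N₀ / β
    let Astar : ℝ := (B - (v + μ) * (w + μ) * N₀ / β) / (w + μ)
    let J : Matrix (Fin 5) (Fin 5) ℝ :=
      !![-(v + (β / N₀) * Astar + μ), -((β / N₀) * Sstar), 0, 0, 0;
         (β / N₀) * Astar, (β / N₀) * Sstar - (w + μ), 0, 0, 0;
         0, w, -(ρ + γ + μ), 0, 0;
         v, 0, γ, -μ, 0;
         0, 0, 0, 0, -μ]
    ∀ z : ℂ, (J.charpoly.map (algebraMap ℝ ℂ)).IsRoot z → z.re < 0 := by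
  intro Sstar Astar J z hz
  have hden : (0:ℝ) < N₀ * (v + μ) * (w + μ) := by positivity
  have h1 : N₀ * (v + μ) * (w + μ) < B * β := (one_lt_div hden).mp hR0
  have hA : 0 < Astar := by
    simp only [Astar]
    apply div_pos _ (by linarith : (0:ℝ) < w + μ)
    rw [sub_pos, div_lt_iff₀ hβ]
    nlinarith
  have hJ : J = !![-(v + (β / N₀) * Astar + μ), -((β / N₀) * Sstar), 0, 0, 0;
         (β / N₀) * Astar, (β / N₀) * Sstar - (w + μ), 0, 0, 0;
         0, w, -(ρ + γ + μ), 0, 0;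
         v, 0, γ, -μ, 0;
         0, 0, 0, 0, -μ] := rfl
  have hchar := charpoly5 (v + (β / N₀) * Astar + μ) ((β / N₀) * Sstar)
      ((β / N₀) * Astar) w γ v (ρ + γ + μ) μ ((β / N₀) * Sstar - (w + μ))
  rw [hJ, hchar] at hz
  have hd : (β / N₀) * Sstar - (w + μ) = 0 := by
    rw [sub_eq_zero]
    simp only [Sstar]
    field_simp
  rw [hd, map_zero, sub_zero] at hz
  simp only [IsRoot.def, Polynomial.map_mul, Polynomial.map_add, Polynomial.map_pow,
    Polynomial.map_X, Polynomial.map_C, eval_mul, eval_add, eval_pow, eval_X, eval_C,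
    Complex.coe_algebraMap] at hz
  set aa : ℝ := v + (β / N₀) * Astar + μ with haa
  set bb : ℝ := (β / N₀) * Sstar with hbb
  set cc : ℝ := (β / N₀) * Astar with hcc
  have haa' : 0 < aa := by rw [haa]; positivity
  have hbb' : 0 < bb := by
    have : bb = w + μ := by rw [hbb, ← sub_eq_zero]; exact hd
    rw [this]; linarith
  have hcc' : 0 < cc := by rw [hcc]; positivity
  rcases mul_eq_zero.mp hz with h | h
  · have hq : z ^ 2 + ((aa : ℝ) : ℂ) * z + (((bb * cc : ℝ)) : ℂ) = 0 := by
      push_cast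
      linear_combination h
    exact quad_root_neg aa (bb * cc) haa' (by positivity) z hq
  · rcases mul_eq_zero.mp h with h | h
    · have hzr : z = -((ρ + γ + μ : ℝ) : ℂ) := by linear_combination h
      have : z.re = -(ρ + γ + μ) := by rw [hzr]; simp
      linarith
    · have hz0 : z + ((μ : ℝ) : ℂ) = 0 :=
        pow_eq_zero_iff (n := 2) (by norm_num) |>.mp h
      have hzr : z = -((μ : ℝ) : ℂ) := by linear_combination hz0
      have : z.re = -μ := by rw [hzr]; simp
      linarith
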